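/- For every k ∈ (0,1), the function f₃(p) = cn p · dn p · ((1-k²)p - 2E(p)) + (1+k²) sn p - 2k² sn³p is strictly positive for all p ∈ (0, K(k)), where sn, cn, dn are Jacobi elliptic functions with modulus k and E(p) = ∫₀ᵖ dn²t dt. -/

import Mathlib

set_option maxHeartbeats 1000000

/-- Positivity of `f₃` on `(0, K(k))` (spacelike case, domain `C₃`). -/
theorem f3_pos
    (k : ℝ) (hk : k ∈ Set.Ioo (0:ℝ) 1)
    (sn cn dn : ℝ → ℝ)
    (hsn0 : sn 0 = 0) (hcn0 : cn 0 = 1) (hdn0 : dn 0 = 1)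
    (hsn : ∀ t, HasDerivAt sn (cn t * dn t) t)
    (hcn : ∀ t, HasDerivAt cn (-(sn t * dn t)) t)
    (hdn : ∀ t, HasDerivAt dn (-(k ^ 2 * sn t * cn t)) t)
    (K : ℝ)
    (hK : K = ∫ t in (0:ℝ)..(Real.pi / 2), 1 / Real.sqrt (1 - k ^ 2 * Real.sin t ^ 2))
    (E : ℝ → ℝ) (hE : ∀ p, E p = ∫ t in (0:ℝ)..p, dn t ^ 2) :
    ∀ p ∈ Set.Ioo 0 K,
      0 < cn p * dn p * ((1 - k ^ 2) * p - 2 * E p)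
          + (1 + k ^ 2) * sn p - 2 * k ^ 2 * sn p ^ 3 := by
  obtain ⟨hk0, hk1⟩ := hk
  have csn : Continuous sn := continuous_iff_continuousAt.2 fun x => (hsn x).continuousAt
  have ccn : Continuous cn := continuous_iff_continuousAt.2 fun x => (hcn x).continuousAt
  have cdn : Continuous dn := continuous_iff_continuousAt.2 fun x => (hdn x).continuousAt
  have hid1 : ∀ t, sn t ^ 2 + cn t ^ 2 = 1 := by
    intro t
    have hD : ∀ x, HasDerivAt (fun t => sn t ^ 2 + cn t ^ 2)
        ((2:ℕ) * sn x ^ 1 * (cn x * dn x) + (2:ℕ) * cn x ^ 1 * (-(sn x * dn x))) x :=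
      fun x => ((hsn x).pow 2).add ((hcn x).pow 2)
    have := is_const_of_deriv_eq_zero (fun x => (hD x).differentiableAt)
      (fun x => by rw [(hD x).deriv]; push_cast; ring) t 0
    simpa [hsn0, hcn0] using this
  have hid2 : ∀ t, dn t ^ 2 = 1 - k ^ 2 * sn t ^ 2 := by
    intro t
    have hD : ∀ x, HasDerivAt (fun t => dn t ^ 2 + k ^ 2 * sn t ^ 2)
        ((2:ℕ) * dn x ^ 1 * (-(k ^ 2 * sn x * cn x)) + k ^ 2 * ((2:ℕ) * sn x ^ 1 * (cn x * dn x))) x :=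
      fun x => ((hdn x).pow 2).add (((hsn x).pow 2).const_mul (k ^ 2))
    have := is_const_of_deriv_eq_zero (fun x => (hD x).differentiableAt)
      (fun x => by rw [(hD x).deriv]; push_cast; ring) t 0
    simp [hsn0, hdn0] at this
    linarith
  have hne : ∀ t, dn t ≠ 0 := by
    intro t h
    have h1 := hid1 t
    have h2 := hid2 t
    rw [h] at h2
    nlinarith [sq_nonneg (cn t), sq_nonneg (sn t)]
  have hdnpos : ∀ t, 0 < dn t := by
    intro t
    by_contra h
    push_neg at h
    have hlt : dn t < 0 := lt_of_le_of_ne h (hne t)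
    rcases le_total 0 t with ht | ht
    · obtain ⟨x, -, hx⟩ := intermediate_value_Icc' ht cdn.continuousOn
        (Set.mem_Icc.2 ⟨hlt.le, by rw [hdn0]; norm_num⟩)
      exact hne x hx
    · obtain ⟨x, -, hx⟩ := intermediate_value_Icc ht cdn.continuousOn
        (Set.mem_Icc.2 ⟨hlt.le, by rw [hdn0]; norm_num⟩)
      exact hne x hx
  have hcnK : ∀ t ∈ Set.Ico (0:ℝ) K, 0 < cn t := by
    intro t ht
    by_contra hct
    push_neg at hct
    obtain ⟨ht0, htK⟩ := ht
    obtain ⟨z, hzmem, hz0⟩ := intermediate_value_Icc' ht0 ccn.continuousOn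
      (Set.mem_Icc.2 ⟨hct, by rw [hcn0]; norm_num⟩)
    set S : Set ℝ := {x | 0 ≤ x ∧ cn x = 0} with hS
    have hSne : S.Nonempty := ⟨z, hzmem.1, hz0⟩
    have hSbdd : BddBelow S := ⟨0, fun x hx => hx.1⟩
    have hSclosed : IsClosed S := by
      have : S = Set.Ici 0 ∩ cn ⁻¹' {0} := by ext x; simp [hS, Set.mem_Ici, and_comm]
      rw [this]
      exact isClosed_Ici.inter (isClosed_singleton.preimage ccn)
    set p₀ := sInf S with hp₀
    have hp₀S : p₀ ∈ S := hSclosed.csInf_mem hSne hSbdd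
    have hcnp₀ : cn p₀ = 0 := hp₀S.2
    have hp₀0 : 0 ≤ p₀ := hp₀S.1
    have hp₀pos : 0 < p₀ := by
      rcases hp₀0.lt_or_eq with h | h
      · exact h
      · exfalso; rw [← h] at hcnp₀; rw [hcn0] at hcnp₀; norm_num at hcnp₀
    have hp₀le : p₀ ≤ t := le_trans (csInf_le hSbdd ⟨hzmem.1, hz0⟩) hzmem.2
    have hcnpos : ∀ x, 0 ≤ x → x < p₀ → 0 < cn x := by
      intro x hx0 hxp
      by_contra hcx
      push_neg at hcx
      obtain ⟨y, hy, hy0⟩ := intermediate_value_Icc' hx0 ccn.continuousOn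
        (Set.mem_Icc.2 ⟨hcx, by rw [hcn0]; norm_num⟩)
      have := csInf_le hSbdd (⟨hy.1, hy0⟩ : y ∈ S)
      linarith [hy.2]
    have hsnmono : StrictMonoOn sn (Set.Icc 0 p₀) := by
      apply strictMonoOn_of_deriv_pos (convex_Icc 0 p₀) csn.continuousOn
      intro x hx
      rw [interior_Icc] at hx
      rw [(hsn x).deriv]
      exact mul_pos (hcnpos x hx.1.le hx.2) (hdnpos x)
    have hsnp₀pos : 0 < sn p₀ := by
      have := hsnmono (Set.left_mem_Icc.2 hp₀0) (Set.right_mem_Icc.2 hp₀0) hp₀pos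
      rwa [hsn0] at this
    have hsnp₀ : sn p₀ = 1 := by
      have h1 := hid1 p₀
      rw [hcnp₀] at h1
      have : (sn p₀ - 1) * (sn p₀ + 1) = 0 := by nlinarith
      rcases mul_eq_zero.1 this with h | h
      · linarith
      · linarith
    set gI : ℝ → ℝ := fun θ => 1 / Real.sqrt (1 - k ^ 2 * Real.sin θ ^ 2) with hgI
    have hpos : ∀ θ : ℝ, 0 < 1 - k ^ 2 * Real.sin θ ^ 2 := by
      intro θ
      nlinarith [Real.sin_sq_le_one θ, sq_nonneg (Real.sin θ)]
    have cgI : Continuous gI := by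
      apply continuous_const.div
      · fun_prop
      · intro θ
        exact (Real.sqrt_pos.2 (hpos θ)).ne'
    set G : ℝ → ℝ := fun y => ∫ θ in (0:ℝ)..y, gI θ with hG
    have cG : Continuous G := by
      have hd : ∀ y : ℝ, HasDerivAt G (gI y) y := fun y =>
        intervalIntegral.integral_hasDerivAt_right (cgI.intervalIntegrable _ _)
          (cgI.stronglyMeasurableAtFilter _ _) cgI.continuousAt
      exact continuous_iff_continuousAt.2 fun y => (hd y).continuousAt
    set A : ℝ → ℝ := fun x => Real.arcsin (sn x) with hA
    have cA : Continuous A := Real.continuous_arcsin.comp csn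
    have key : ∀ b, 0 ≤ b → b < p₀ → G (A b) = b := by
      intro b hb0 hbp
      have huIcc : Set.uIcc (0:ℝ) b = Set.Icc 0 b := Set.uIcc_of_le hb0
      have hderiv : ∀ x ∈ Set.uIcc (0:ℝ) b, HasDerivAt A (dn x) x := by
        intro x hx
        rw [huIcc, Set.mem_Icc] at hx
        have hcx : 0 < cn x := hcnpos x hx.1 (lt_of_le_of_lt hx.2 hbp)
        have hs2 : sn x ^ 2 < 1 := by nlinarith [hid1 x]
        have hs1 : sn x < 1 := by nlinarith
        have hsm1 : -1 < sn x := by nlinarith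
        have harc := (Real.hasDerivAt_arcsin (by linarith) (by linarith)).comp x (hsn x)
        refine harc.congr_deriv ?_
        have hsq : Real.sqrt (1 - sn x ^ 2) = cn x := by
          rw [show 1 - sn x ^ 2 = cn x ^ 2 by linarith [hid1 x]]
          exact Real.sqrt_sq hcx.le
        rw [hsq]
        field_simp [hcx.ne']
      have hsub := intervalIntegral.integral_comp_smul_deriv hderiv cdn.continuousOn cgI
      have hA0 : A 0 = 0 := by rw [hA]; simp [hsn0, Real.arcsin_zero]
      have hleft : (∫ x in (0:ℝ)..b, dn x • (gI ∘ A) x) = b := by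
        rw [intervalIntegral.integral_congr (g := fun _ => (1:ℝ))]
        · simp
        · intro x hx
          rw [huIcc, Set.mem_Icc] at hx
          have hcx : 0 < cn x := hcnpos x hx.1 (lt_of_le_of_lt hx.2 hbp)
          have hsin : Real.sin (A x) = sn x :=
            Real.sin_arcsin (by nlinarith [hid1 x, sq_nonneg (cn x), sq_nonneg (sn x + 1)])
              (by nlinarith [hid1 x, sq_nonneg (cn x), sq_nonneg (sn x - 1)])
          simp only [Function.comp, hgI, smul_eq_mul]
          rw [hsin, show 1 - k ^ 2 * sn x ^ 2 = dn x ^ 2 from (hid2 x).symm,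
            Real.sqrt_sq (hdnpos x).le]
          field_simp [(hdnpos x).ne']
      rw [hA0] at hsub
      rw [hG]
      simp only
      rw [← hsub, hleft]
    have hlim1 : Filter.Tendsto (fun b => G (A b)) (nhdsWithin p₀ (Set.Iio p₀)) (nhds (G (A p₀))) :=
      ((cG.comp cA).tendsto p₀).mono_left nhdsWithin_le_nhds
    have heq : (fun b => G (A b)) =ᶠ[nhdsWithin p₀ (Set.Iio p₀)] id := by
      filter_upwards [Ioo_mem_nhdsLT_of_mem (Set.mem_Ioc.2 ⟨hp₀pos, le_refl p₀⟩)] with b hb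
      exact key b hb.1.le hb.2
    have hlim2 : Filter.Tendsto (fun b => G (A b)) (nhdsWithin p₀ (Set.Iio p₀)) (nhds p₀) := by
      rw [Filter.tendsto_congr' heq]
      exact Filter.tendsto_id'.2 nhdsWithin_le_nhds
    have hGp : G (A p₀) = p₀ := tendsto_nhds_unique hlim1 hlim2
    have hAp₀ : A p₀ = Real.pi / 2 := by rw [hA]; simp [hsnp₀, Real.arcsin_one]
    have hKp : K = p₀ := by
      rw [hK, ← hGp, hAp₀]
    linarith
  have hE' : ∀ x, HasDerivAt E (dn x ^ 2) x := by
    have hEeq : E = fun p => ∫ t in (0:ℝ)..p, dn t ^ 2 := funext hE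
    rw [hEeq]
    intro x
    exact intervalIntegral.integral_hasDerivAt_right ((cdn.pow 2).intervalIntegrable _ _)
      ((cdn.pow 2).stronglyMeasurableAtFilter _ _) (cdn.pow 2).continuousAt
  set F : ℝ → ℝ := fun p => cn p * dn p * ((1 - k ^ 2) * p - 2 * E p)
      + (1 + k ^ 2) * sn p - 2 * k ^ 2 * sn p ^ 3 with hF
  set FD : ℝ → ℝ := fun x => (-(sn x * dn x) * dn x + cn x * -(k ^ 2 * sn x * cn x))
      * ((1 - k ^ 2) * x - 2 * E x) + cn x * dn x * (2 - 2 * dn x ^ 2 - 6 * k ^ 2 * sn x ^ 2)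
      with hFD
  have hF' : ∀ x, HasDerivAt F (FD x) x := by
    intro x
    have h := ((((hcn x).mul (hdn x)).mul
        (((hasDerivAt_id x).const_mul ((1:ℝ) - k ^ 2)).sub ((hE' x).const_mul 2))).add
        ((hsn x).const_mul ((1:ℝ) + k ^ 2))).sub (((hsn x).pow 3).const_mul (2 * k ^ 2))
    refine h.congr_deriv ?_
    simp only [hFD, Pi.mul_apply, Pi.sub_apply, id_eq]
    push_cast
    ring
  set G2 : ℝ → ℝ := fun p => F p / (cn p * dn p) with hG2
  have contF : Continuous F := continuous_iff_continuousAt.2 fun x => (hF' x).continuousAt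
  -- positivity of sn on (0, K)
  have hsnpos : ∀ x, 0 < x → x < K → 0 < sn x := by
    intro x hx0 hxK
    have hmono : StrictMonoOn sn (Set.Icc 0 x) := by
      apply strictMonoOn_of_deriv_pos (convex_Icc 0 x) csn.continuousOn
      intro y hy
      rw [interior_Icc] at hy
      rw [(hsn y).deriv]
      exact mul_pos (hcnK y ⟨hy.1.le, hy.2.trans hxK⟩) (hdnpos y)
    have := hmono (Set.left_mem_Icc.2 hx0.le) (Set.right_mem_Icc.2 hx0.le) hx0
    rwa [hsn0] at this
  have hG2d : ∀ x, 0 ≤ x → x < K →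
      HasDerivAt G2 ((1 - k ^ 2) ^ 2 * sn x ^ 2 / (cn x * dn x) ^ 2) x := by
    intro x hx0 hxK
    have hcd : (0:ℝ) < cn x * dn x := mul_pos (hcnK x ⟨hx0, hxK⟩) (hdnpos x)
    have hdiv := (hF' x).div ((hcn x).mul (hdn x)) hcd.ne'
    have hnum : FD x * (cn x * dn x)
        - F x * (-(sn x * dn x) * dn x + cn x * -(k ^ 2 * sn x * cn x))
        = (1 - k ^ 2) ^ 2 * sn x ^ 2 := by
      rw [hFD, hF]
      linear_combination
        (k ^ 2 * sn x ^ 2 * (k ^ 2 - 3 + 2 * k ^ 2 * sn x ^ 2)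
          + (dn x ^ 2 - 1 + k ^ 2 * sn x ^ 2) * (-(4 * k ^ 2 * sn x ^ 2) - 2 * dn x ^ 2))
          * hid1 x
        + ((1 - sn x ^ 2) * (-(4 * k ^ 2 * sn x ^ 2) - 2 * dn x ^ 2)
          + sn x ^ 2 * (1 + k ^ 2 - 2 * k ^ 2 * sn x ^ 2)) * hid2 x
    simp only [Pi.mul_apply] at hdiv
    rw [hnum] at hdiv
    exact hdiv
  intro p hp
  obtain ⟨hp0, hpK⟩ := hp
  have hsub : Set.Icc 0 p ⊆ Set.Ico 0 K := fun y hy => ⟨hy.1, lt_of_le_of_lt hy.2 hpK⟩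
  have hmono : StrictMonoOn G2 (Set.Icc 0 p) := by
    apply strictMonoOn_of_deriv_pos (convex_Icc 0 p)
    · apply ContinuousOn.div contF.continuousOn (ccn.mul cdn).continuousOn
      intro y hy
      exact (mul_pos (hcnK y (hsub hy)) (hdnpos y)).ne'
    · intro y hy
      rw [interior_Icc] at hy
      have hyK : y < K := hy.2.trans hpK
      rw [(hG2d y hy.1.le hyK).deriv]
      apply div_pos
      · have h1 := hsnpos y hy.1 hyK
        have h2 : (0:ℝ) < 1 - k ^ 2 := by nlinarith
        positivity
      · have := mul_pos (hcnK y ⟨hy.1.le, hyK⟩) (hdnpos y)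
        positivity
  have hE0 : E 0 = 0 := by rw [hE]; simp
  have hG20 : G2 0 = 0 := by
    rw [hG2]
    simp only [hF, hsn0, hcn0, hdn0, hE0]
    norm_num
  have hG2p : 0 < G2 p := by
    have := hmono (Set.left_mem_Icc.2 hp0.le) (Set.right_mem_Icc.2 hp0.le) hp0
    rwa [hG20] at this
  have hcdp : (0:ℝ) < cn p * dn p := mul_pos (hcnK p ⟨hp0.le, hpK⟩) (hdnpos p)
  have h := mul_pos hG2p hcdp
  rw [show G2 p = F p / (cn p * dn p) from rfl, div_mul_cancel₀ _ hcdp.ne'] at h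
  simpa only [hF] using h
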